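/- arXiv:math/0406170 — 3 statements merged into one kernel-verified Lean document; each statement's English description precedes it below -/
import Mathlib

section
/- Let μ ∈ ℂ, μ ≠ 0, and let f : [0,1] → ℂ be twice continuously differentiable. Let f^{(-1)}, f^{(-2)} : [0,1] → ℂ satisfy (f^{(-2)})' = f^{(-1)}, (f^{(-1)})' = f, f^{(-1)}(1) = 0, and f^{(-2)}(1) = μ³. Assume f(0) = μ^{-1}, f'(0) = 0, and that for all x ∈ [0,1]: f(x) ≠ 0; f^{(-1)}(x)f'(x) − f(x)² ≠ 0; and the 3×3 determinant det[[f^{(-2)}(x), f^{(-1)}(x), f(x)],[f^{(-1)}(x), f(x), f'(x)],[f(x), f'(x), f''(x)]] = 0. Define functions on [0,1]: w₁₁ = f; w₂₂ = w₄₄ = −(1/μ)·(f^{(-1)}f' − f²)/f²; w₂₄ = (1/μ²)·f^{(-1)}·(f^{(-1)}f' − f²)/f²; w₄₂ = f'/f²; w₃₃ = μ²·f·(f f'' − (f')²)/(f^{(-1)}f' − f²)². Then for all x ∈ [0,1]: (1) L*(w₄₂)(x) + 1/w₁₁(x) = μ; (2) w₃₃(x) ≠ 0 and L(w₂₄)(x)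 + 1/w₃₃(x) = μ; (3) the 2×2 matrix W(x) = [[w₂₂(x), w₂₄(x)],[w₄₂(x), w₄₄(x)]] is invertible and [[0, L(w₁₁)(x)],[L*(w₃₃)(x), 0]] + W(x)^{-1} = μ·I₂. -/
set_option maxHeartbeats 2000000


/-- Verification of the explicit solution of the `M₄(D)`-valued `R`-transform equation for the
quasi-nilpotent DT-operator in the case `k = 2`.  Here `F1 = f^{(-1)}`, `F2 = f^{(-2)}` are
antiderivatives of a twice continuously differentiable `f` with `F1 1 = 0`, `F2 1 = μ³`,
`f 0 = μ⁻¹`, `f' 0 = 0`, `f` nonvanishing, `f^{(-1)}f' − f² ≠ 0`, and the 3×3 Hankel determinant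
of `(f^{(-2)},…,f'')` vanishing on `[0,1]`.  With
`w₁₁ = f`, `w₂₂ = w₄₄ = −(1/μ)(f^{(-1)}f' − f²)/f²`, `w₂₄ = (1/μ²)f^{(-1)}(f^{(-1)}f' − f²)/f²`,
`w₄₂ = f'/f²`, `w₃₃ = μ²f(ff'' − (f')²)/(f^{(-1)}f' − f²)²`, one has on `[0,1]`:
(1) `L*(w₄₂) + 1/w₁₁ = μ`; (2) `w₃₃ ≠ 0` and `L(w₂₄) + 1/w₃₃ = μ`; and (3) the matrix
`W = [[w₂₂, w₂₄],[w₄₂, w₄₄]]` is invertible with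
`[[0, L(w₁₁)],[L*(w₃₃), 0]] + W⁻¹ = μ·I₂`. -/
theorem R_transform_solution_k_two (μ : ℂ) (hμ : μ ≠ 0)
    (f f' f'' F1 F2 : ℝ → ℂ)
    (hf : ∀ x ∈ Set.Icc (0:ℝ) 1, HasDerivAt f (f' x) x)
    (hf' : ∀ x ∈ Set.Icc (0:ℝ) 1, HasDerivAt f' (f'' x) x)
    (hf''cont : ContinuousOn f'' (Set.Icc 0 1))
    (hF1 : ∀ x ∈ Set.Icc (0:ℝ) 1, HasDerivAt F1 (f x) x)
    (hF2 : ∀ x ∈ Set.Icc (0:ℝ) 1, HasDerivAt F2 (F1 x) x)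
    (hF1_one : F1 1 = 0) (hF2_one : F2 1 = μ ^ 3)
    (hf_zero : f 0 = μ⁻¹) (hf'_zero : f' 0 = 0)
    (hf_ne : ∀ x ∈ Set.Icc (0:ℝ) 1, f x ≠ 0)
    (h2_ne : ∀ x ∈ Set.Icc (0:ℝ) 1, F1 x * f' x - (f x) ^ 2 ≠ 0)
    (h3_det : ∀ x ∈ Set.Icc (0:ℝ) 1,
      (!![F2 x, F1 x, f x; F1 x, f x, f' x; f x, f' x, f'' x] :
        Matrix (Fin 3) (Fin 3) ℂ).det = 0)
    (w11 w22 w24 w42 w33 : ℝ → ℂ)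
    (hw11 : ∀ x, w11 x = f x)
    (hw22 : ∀ x, w22 x = -(1 / μ) * (F1 x * f' x - (f x) ^ 2) / (f x) ^ 2)
    (hw24 : ∀ x, w24 x = (1 / μ ^ 2) * F1 x * (F1 x * f' x - (f x) ^ 2) / (f x) ^ 2)
    (hw42 : ∀ x, w42 x = f' x / (f x) ^ 2)
    (hw33 : ∀ x, w33 x = μ ^ 2 * f x * (f x * f'' x - (f' x) ^ 2) /
        (F1 x * f' x - (f x) ^ 2) ^ 2) :
    ∀ x ∈ Set.Icc (0:ℝ) 1,
      ((∫ t in (0:ℝ)..x, w42 t) + 1 / w11 x = μ) ∧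
      (w33 x ≠ 0 ∧ (∫ t in x..(1:ℝ), w24 t) + 1 / w33 x = μ) ∧
      (IsUnit (!![w22 x, w24 x; w42 x, w22 x] : Matrix (Fin 2) (Fin 2) ℂ) ∧
        !![0, ∫ t in x..(1:ℝ), w11 t; ∫ t in (0:ℝ)..x, w33 t, 0] +
            (!![w22 x, w24 x; w42 x, w22 x] : Matrix (Fin 2) (Fin 2) ℂ)⁻¹ =
          μ • (1 : Matrix (Fin 2) (Fin 2) ℂ)) := by

  classical
  intro x hx
  obtain ⟨hx0, hx1⟩ := hx
  have hxmem : x ∈ Set.Icc (0:ℝ) 1 := ⟨hx0, hx1⟩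
  have h1mem : (1:ℝ) ∈ Set.Icc (0:ℝ) 1 := by constructor <;> norm_num
  have hsub0x : Set.uIcc (0:ℝ) x ⊆ Set.Icc (0:ℝ) 1 := by
    rw [Set.uIcc_of_le hx0]
    exact Set.Icc_subset_Icc le_rfl hx1
  have hsubx1 : Set.uIcc x (1:ℝ) ⊆ Set.Icc (0:ℝ) 1 := by
    rw [Set.uIcc_of_le hx1]
    exact Set.Icc_subset_Icc hx0 le_rfl
  -- continuity facts
  have cf : ContinuousOn f (Set.Icc (0:ℝ) 1) := fun t ht =>
    (hf t ht).continuousAt.continuousWithinAt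
  have cf' : ContinuousOn f' (Set.Icc (0:ℝ) 1) := fun t ht =>
    (hf' t ht).continuousAt.continuousWithinAt
  have cF1 : ContinuousOn F1 (Set.Icc (0:ℝ) 1) := fun t ht =>
    (hF1 t ht).continuousAt.continuousWithinAt
  -- determinant expansion
  have hdet : ∀ t ∈ Set.Icc (0:ℝ) 1,
      F2 t * (f t * f'' t - f' t ^ 2) - F1 t * (F1 t * f'' t - f t * f' t)
        + f t * (F1 t * f' t - f t ^ 2) = 0 := by
    intro t ht
    have h := h3_det t ht
    simp [Matrix.det_fin_three] at h
    linear_combination h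
  -- key adjugate identity
  have hkey : ∀ t ∈ Set.Icc (0:ℝ) 1,
      (f t * f'' t - f' t ^ 2) * (F2 t * f t - F1 t ^ 2)
        = (F1 t * f' t - f t ^ 2) ^ 2 := by
    intro t ht
    linear_combination (f t) * hdet t ht
  have hh_ne : ∀ t ∈ Set.Icc (0:ℝ) 1, f t * f'' t - f' t ^ 2 ≠ 0 := by
    intro t ht hz
    have hk := hkey t ht
    rw [hz, zero_mul] at hk
    exact h2_ne t ht (by
      have := hk.symm
      exact pow_eq_zero_iff (two_ne_zero) |>.mp this)
  have hw33_ne : w33 x ≠ 0 := by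
    rw [hw33]
    exact div_ne_zero
      (mul_ne_zero (mul_ne_zero (pow_ne_zero 2 hμ) (hf_ne x hxmem)) (hh_ne x hxmem))
      (pow_ne_zero 2 (h2_ne x hxmem))
  -- squares derivative helpers
  have hsqf : ∀ t ∈ Set.Icc (0:ℝ) 1,
      HasDerivAt (fun s => f s ^ 2) (2 * f t * f' t) t := by
    intro t ht
    have h : HasDerivAt (fun s => f s ^ 2) (f' t * f t + f t * f' t) t := by
      simpa only [pow_two] using (hf t ht).fun_mul (hf t ht)
    convert h using 1
    ring
  have hsqF1 : ∀ t ∈ Set.Icc (0:ℝ) 1,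
      HasDerivAt (fun s => F1 s ^ 2) (2 * F1 t * f t) t := by
    intro t ht
    have h : HasDerivAt (fun s => F1 s ^ 2) (f t * F1 t + F1 t * f t) t := by
      simpa only [pow_two] using (hF1 t ht).fun_mul (hF1 t ht)
    convert h using 1
    ring
  -- Part 1
  have part1 : (∫ t in (0:ℝ)..x, w42 t) + 1 / w11 x = μ := by
    have hderiv : ∀ t ∈ Set.uIcc (0:ℝ) x,
        HasDerivAt (fun s => -((1:ℂ) / f s)) (w42 t) t := by
      intro t ht
      have htI := hsub0x ht
      have h0 : HasDerivAt (fun s => (1:ℂ) / f s)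
          ((0 * f t - 1 * f' t) / f t ^ 2) t :=
        (hasDerivAt_const t (1:ℂ)).div (hf t htI) (hf_ne t htI)
      have h1 := h0.neg
      convert h1 using 1
      · rfl
      · rfl
      rw [hw42]
      ring
    have hint : IntervalIntegrable w42 MeasureTheory.volume 0 x := by
      have hcw : ContinuousOn (fun t => f' t / f t ^ 2) (Set.uIcc (0:ℝ) x) :=
        (cf'.mono hsub0x).div ((cf.mono hsub0x).pow 2)
          (fun t ht => pow_ne_zero 2 (hf_ne t (hsub0x ht)))
      exact (hcw.congr (fun t _ => hw42 t)).intervalIntegrable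
    rw [intervalIntegral.integral_eq_sub_of_hasDerivAt hderiv hint]
    rw [hw11, hf_zero]
    have hfx := hf_ne x hxmem
    field_simp
    ring
  -- Part 2
  have hGderiv : ∀ t ∈ Set.Icc (0:ℝ) 1,
      HasDerivAt (fun s => (F2 s * f s - F1 s ^ 2) / (μ ^ 2 * f s)) (w24 t) t := by
    intro t ht
    have hnum : HasDerivAt (fun s => F2 s * f s - F1 s ^ 2)
        (F1 t * f t + F2 t * f' t - 2 * F1 t * f t) t :=
      ((hF2 t ht).mul (hf t ht)).sub (hsqF1 t ht)
    have hden : HasDerivAt (fun s => μ ^ 2 * f s) (μ ^ 2 * f' t) t :=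
      (hf t ht).const_mul _
    have h := hnum.div hden (mul_ne_zero (pow_ne_zero 2 hμ) (hf_ne t ht))
    convert h using 1
    · rfl
    · rfl
    rw [hw24]
    have hft := hf_ne t ht
    field_simp
    ring
  have hG1 : (F2 1 * f 1 - F1 1 ^ 2) / (μ ^ 2 * f 1) = μ := by
    rw [hF1_one, hF2_one]
    have := hf_ne 1 h1mem
    field_simp
    ring
  have hGx : 1 / w33 x = (F2 x * f x - F1 x ^ 2) / (μ ^ 2 * f x) := by
    rw [one_div]
    rw [inv_eq_of_mul_eq_one_right ?_]
    rw [hw33]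
    have hfx := hf_ne x hxmem
    have hgx := h2_ne x hxmem
    have hhx := hh_ne x hxmem
    have hk := hkey x hxmem
    rw [div_mul_div_comm, div_eq_one_iff_eq
      (mul_ne_zero (pow_ne_zero 2 hgx) (mul_ne_zero (pow_ne_zero 2 hμ) hfx))]
    linear_combination (μ ^ 2 * f x) * hk
  have part2 : (∫ t in x..(1:ℝ), w24 t) + 1 / w33 x = μ := by
    have hint : IntervalIntegrable w24 MeasureTheory.volume x 1 := by
      have hcw : ContinuousOn (fun t => (1 / μ ^ 2) * F1 t * (F1 t * f' t - f t ^ 2) / f t ^ 2)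
          (Set.uIcc x (1:ℝ)) := by
        apply ContinuousOn.div
        · exact (((continuousOn_const).mul (cF1.mono hsubx1)).mul
            (((cF1.mono hsubx1).mul (cf'.mono hsubx1)).sub ((cf.mono hsubx1).pow 2)))
        · exact (cf.mono hsubx1).pow 2
        · exact fun t ht => pow_ne_zero 2 (hf_ne t (hsubx1 ht))
      exact (hcw.congr (fun t _ => hw24 t)).intervalIntegrable
    rw [intervalIntegral.integral_eq_sub_of_hasDerivAt
      (fun t ht => hGderiv t (hsubx1 ht)) hint]
    rw [hG1, hGx]
    ring
  -- antiderivative of w33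
  have hPderiv : ∀ t ∈ Set.Icc (0:ℝ) 1,
      HasDerivAt (fun s => -(μ ^ 2 * f' s / (F1 s * f' s - f s ^ 2))) (w33 t) t := by
    intro t ht
    have hnum : HasDerivAt (fun s => μ ^ 2 * f' s) (μ ^ 2 * f'' t) t :=
      (hf' t ht).const_mul _
    have hden : HasDerivAt (fun s => F1 s * f' s - f s ^ 2)
        (f t * f' t + F1 t * f'' t - 2 * f t * f' t) t :=
      ((hF1 t ht).mul (hf' t ht)).sub (hsqf t ht)
    have h := (hnum.div hden (h2_ne t ht)).neg
    convert h using 1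
    · rfl
    · rfl
    rw [hw33]
    have hgt := h2_ne t ht
    field_simp
    ring
  have hintw33 : IntervalIntegrable w33 MeasureTheory.volume 0 x := by
    have hcw : ContinuousOn (fun t => μ ^ 2 * f t * (f t * f'' t - f' t ^ 2) /
        (F1 t * f' t - f t ^ 2) ^ 2) (Set.uIcc (0:ℝ) x) := by
      apply ContinuousOn.div
      · exact ((continuousOn_const).mul (cf.mono hsub0x)).mul
          (((cf.mono hsub0x).mul (hf''cont.mono hsub0x)).sub ((cf'.mono hsub0x).pow 2))
      · exact (((cF1.mono hsub0x).mul (cf'.mono hsub0x)).sub ((cf.mono hsub0x).pow 2)).pow 2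
      · exact fun t ht => pow_ne_zero 2 (h2_ne t (hsub0x ht))
    exact (hcw.congr (fun t _ => hw33 t)).intervalIntegrable
  have hI0 : (∫ t in (0:ℝ)..x, w33 t) = -(μ ^ 2 * f' x / (F1 x * f' x - f x ^ 2)) := by
    rw [intervalIntegral.integral_eq_sub_of_hasDerivAt
      (fun t ht => hPderiv t (hsub0x ht)) hintw33]
    rw [hf'_zero]
    simp
  have hI1 : (∫ t in x..(1:ℝ), w11 t) = -F1 x := by
    have hint : IntervalIntegrable w11 MeasureTheory.volume x 1 :=
      ((cf.mono hsubx1).congr (fun t _ => hw11 t)).intervalIntegrable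
    have hderiv : ∀ t ∈ Set.uIcc x (1:ℝ), HasDerivAt F1 (w11 t) t := by
      intro t ht
      rw [hw11]
      exact hF1 t (hsubx1 ht)
    rw [intervalIntegral.integral_eq_sub_of_hasDerivAt hderiv hint, hF1_one]
    ring
  -- matrix part
  have hfx := hf_ne x hxmem
  have hgx := h2_ne x hxmem
  have hcancel : ∀ c : ℂ, ((1 / μ ^ 2) * F1 x * (F1 x * f' x - f x ^ 2) / f x ^ 2) *
      (μ ^ 2 * c / (F1 x * f' x - f x ^ 2)) = F1 x * c / f x ^ 2 := by
    intro c
    field_simp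
  have e11 : w22 x * μ + w24 x * (μ ^ 2 * f' x / (F1 x * f' x - f x ^ 2)) = 1 := by
    rw [hw22, hw24, hcancel (f' x)]
    field_simp
    ring
  have e12 : w22 x * F1 x + w24 x * μ = 0 := by
    rw [hw22, hw24]
    field_simp
    ring
  have e21 : w42 x * μ + w22 x * (μ ^ 2 * f' x / (F1 x * f' x - f x ^ 2)) = 0 := by
    rw [hw42, hw22]
    have hgx' : f' x * F1 x - f x ^ 2 ≠ 0 := by rw [mul_comm]; exact hgx
    field_simp
    ring
  have e22 : w42 x * F1 x + w22 x * μ = 1 := by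
    rw [hw42, hw22]
    field_simp
    ring
  have f11 : μ * w22 x + F1 x * w42 x = 1 := by
    rw [hw22, hw42]
    field_simp
    ring
  have f12 : μ * w24 x + F1 x * w22 x = 0 := by
    rw [hw22, hw24]
    field_simp
    ring
  have f21 : μ ^ 2 * f' x / (F1 x * f' x - f x ^ 2) * w22 x + μ * w42 x = 0 := by
    rw [hw22, hw42]
    have hgx' : f' x * F1 x - f x ^ 2 ≠ 0 := by rw [mul_comm]; exact hgx
    field_simp
    ring
  have f22 : μ ^ 2 * f' x / (F1 x * f' x - f x ^ 2) * w24 x + μ * w22 x = 1 := by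
    rw [hw22, hw24, mul_comm (μ ^ 2 * f' x / (F1 x * f' x - f x ^ 2)), hcancel (f' x)]
    field_simp
    ring
  have hWV : (!![w22 x, w24 x; w42 x, w22 x] : Matrix (Fin 2) (Fin 2) ℂ) *
      !![μ, F1 x; μ ^ 2 * f' x / (F1 x * f' x - f x ^ 2), μ] = 1 := by
    rw [Matrix.mul_fin_two, Matrix.one_fin_two, e11, e12, e21, e22]
  have hVW : (!![μ, F1 x; μ ^ 2 * f' x / (F1 x * f' x - f x ^ 2), μ] :
      Matrix (Fin 2) (Fin 2) ℂ) * !![w22 x, w24 x; w42 x, w22 x] = 1 := by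
    rw [Matrix.mul_fin_two, Matrix.one_fin_two, f11, f12, f21, f22]
  have hUnit : IsUnit (!![w22 x, w24 x; w42 x, w22 x] : Matrix (Fin 2) (Fin 2) ℂ) :=
    ⟨⟨_, _, hWV, hVW⟩, rfl⟩
  have hWinv : (!![w22 x, w24 x; w42 x, w22 x] : Matrix (Fin 2) (Fin 2) ℂ)⁻¹ =
      !![μ, F1 x; μ ^ 2 * f' x / (F1 x * f' x - f x ^ 2), μ] :=
    Matrix.inv_eq_right_inv hWV
  refine ⟨part1, ⟨hw33_ne, part2⟩, hUnit, ?_⟩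
  rw [hWinv, hI0, hI1]
  ext i j
  fin_cases i <;> fin_cases j <;>
    simp [Matrix.add_apply, Matrix.smul_apply, Matrix.one_apply]
end

section
/- Let s, μ ∈ ℂ be nonzero with μ² = 1/(2s), and let α₁, α₂ ∈ ℂ be nonzero and distinct with α₁·e^{−α₁} = s and α₂·e^{−α₂} = −s. Put γ₁ = α₂/(α₂ − α₁) and γ₂ = α₁/(α₁ − α₂). Define f(x) = μ^{-1}(γ₁e^{2α₁x} + γ₂e^{2α₂x}), f^{(-1)}(x) = (2μ)^{-1}(γ₁α₁^{-1}e^{2α₁x} + γ₂α₂^{-1}e^{2α₂x}), f^{(-2)}(x) = (4μ)^{-1}(γ₁α₁^{-2}e^{2α₁x} + γ₂α₂^{-2}e^{2α₂x}) for x ∈ ℝ. Then: (f^{(-2)})' = f^{(-1)} and (f^{(-1)})' = f; f^{(-1)}(1) = 0 and f^{(-2)}(1) = μ³; f(0) = μ^{-1} and f'(0) = 0; and for all x ∈ ℝ, f^{(-2)}(x+1) = μ⁴·f(x), f^{(-1)}(x+1) = μ⁴·f'(x), and f(x+1) = μ⁴·f''(x). -/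
/-- Properties of the explicit function `f` built from two branches of Lambert's W-function
(case `k = 2`): with `μ² = 1/(2s)`, `α₁e^{−α₁} = s`, `α₂e^{−α₂} = −s`,
`γ₁ = α₂/(α₂−α₁)`, `γ₂ = α₁/(α₁−α₂)`, and `f`, `f^{(-1)} = F1`, `f^{(-2)} = F2` defined by the
indicated exponential sums, the `F j` are successive antiderivatives of `f`, `F1 1 = 0`,
`F2 1 = μ³`, `f 0 = μ⁻¹`, `f' 0 = 0`, and `F2 (x+1) = μ⁴f(x)`, `F1 (x+1) = μ⁴f'(x)`,
`f (x+1) = μ⁴f''(x)` for all real `x`. -/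
theorem explicit_solution_properties_k_two (s μ α₁ α₂ γ₁ γ₂ : ℂ)
    (hs : s ≠ 0) (hμ : μ ≠ 0) (hα₁ : α₁ ≠ 0) (hα₂ : α₂ ≠ 0) (hαne : α₁ ≠ α₂)
    (hμ2 : μ ^ 2 = 1 / (2 * s))
    (h1 : α₁ * Complex.exp (-α₁) = s) (h2 : α₂ * Complex.exp (-α₂) = -s)
    (hγ₁ : γ₁ = α₂ / (α₂ - α₁)) (hγ₂ : γ₂ = α₁ / (α₁ - α₂))
    (f F1 F2 : ℝ → ℂ)
    (hf : ∀ x : ℝ, f x =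
      μ⁻¹ * (γ₁ * Complex.exp (2 * α₁ * (x : ℂ)) + γ₂ * Complex.exp (2 * α₂ * (x : ℂ))))
    (hF1 : ∀ x : ℝ, F1 x =
      (2 * μ)⁻¹ * (γ₁ * α₁⁻¹ * Complex.exp (2 * α₁ * (x : ℂ)) +
        γ₂ * α₂⁻¹ * Complex.exp (2 * α₂ * (x : ℂ))))
    (hF2 : ∀ x : ℝ, F2 x =
      (4 * μ)⁻¹ * (γ₁ * (α₁ ^ 2)⁻¹ * Complex.exp (2 * α₁ * (x : ℂ)) +
        γ₂ * (α₂ ^ 2)⁻¹ * Complex.exp (2 * α₂ * (x : ℂ)))) :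
    (∀ x : ℝ, HasDerivAt F2 (F1 x) x) ∧
    (∀ x : ℝ, HasDerivAt F1 (f x) x) ∧
    F1 1 = 0 ∧ F2 1 = μ ^ 3 ∧ f 0 = μ⁻¹ ∧ deriv f 0 = 0 ∧
    ∀ x : ℝ,
      F2 (x + 1) = μ ^ 4 * f x ∧
      F1 (x + 1) = μ ^ 4 * deriv f x ∧
      f (x + 1) = μ ^ 4 * deriv (deriv f) x := by
  have hd : α₂ - α₁ ≠ 0 := sub_ne_zero.mpr (Ne.symm hαne)
  have hd' : α₁ - α₂ ≠ 0 := sub_ne_zero.mpr hαne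
  have hs_eq : s = (2*μ^2)⁻¹ := by field_simp [hμ2]; rw [hμ2]; field_simp
  have hγsum : γ₁ + γ₂ = 1 := by
    rw [hγ₁, hγ₂]; field_simp; ring
  have hγα : γ₁ * α₁ + γ₂ * α₂ = 0 := by
    rw [hγ₁, hγ₂]; field_simp; ring
  have key : ∀ α t : ℂ, α ≠ 0 → t ≠ 0 → α * Complex.exp (-α) = t →
      Complex.exp (2*α) = α^2 / t^2 := by
    intro α t hα ht h
    have ha : Complex.exp (-α) = t / α := by rw [eq_div_iff hα, mul_comm]; exact h
    have hb : Complex.exp α = α / t := by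
      rw [← inv_inv (Complex.exp α), ← Complex.exp_neg, ha, inv_div]
    calc Complex.exp (2*α) = Complex.exp α * Complex.exp α := by
          rw [← Complex.exp_add]; ring_nf
      _ = α^2/t^2 := by rw [hb]; ring
  have hexp1 : Complex.exp (2*α₁) = 4*μ^4*α₁^2 := by
    have h := key α₁ s hα₁ hs h1
    rw [h, hs_eq]; field_simp; ring
  have hexp2 : Complex.exp (2*α₂) = 4*μ^4*α₂^2 := by
    have h := key α₂ (-s) hα₂ (neg_ne_zero.mpr hs) h2
    rw [neg_sq] at h
    rw [h, hs_eq]; field_simp; ring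
  -- derivative of the basic exponential
  have hder : ∀ (c : ℂ) (x : ℝ),
      HasDerivAt (fun y : ℝ => Complex.exp (2*c*y)) (2*c*Complex.exp (2*c*x)) x := by
    intro c x
    have h : HasDerivAt (fun y : ℝ => 2*c*(y:ℂ)) (2*c) x := by
      simpa using ((hasDerivAt_id x).ofReal_comp).const_mul (2*c)
    simpa [mul_comm] using h.cexp
  -- first and second derivative of f
  have hf' : ∀ x : ℝ, HasDerivAt f
      (2 * μ⁻¹ * (γ₁ * α₁ * Complex.exp (2*α₁*x) + γ₂ * α₂ * Complex.exp (2*α₂*x))) x := by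
    intro x
    have h := (((hder α₁ x).const_mul γ₁).add ((hder α₂ x).const_mul γ₂)).const_mul μ⁻¹
    have heq : f = fun y : ℝ =>
        μ⁻¹ * (γ₁ * Complex.exp (2*α₁*y) + γ₂ * Complex.exp (2*α₂*y)) := funext hf
    rw [heq]
    convert h using 1
    · rfl
    · rfl
    ring
  have hdf : deriv f = fun x : ℝ =>
      2 * μ⁻¹ * (γ₁ * α₁ * Complex.exp (2*α₁*x) + γ₂ * α₂ * Complex.exp (2*α₂*x)) :=
    funext fun x => (hf' x).deriv
  have hf'' : ∀ x : ℝ, HasDerivAt (deriv f)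
      (4 * μ⁻¹ * (γ₁ * α₁^2 * Complex.exp (2*α₁*x) + γ₂ * α₂^2 * Complex.exp (2*α₂*x))) x := by
    intro x
    have h := (((hder α₁ x).const_mul (γ₁*α₁)).add
      ((hder α₂ x).const_mul (γ₂*α₂))).const_mul (2*μ⁻¹)
    rw [hdf]
    convert h using 1
    · rfl
    · rfl
    ring
  have hddf : deriv (deriv f) = fun x : ℝ =>
      4 * μ⁻¹ * (γ₁ * α₁^2 * Complex.exp (2*α₁*x) + γ₂ * α₂^2 * Complex.exp (2*α₂*x)) :=
    funext fun x => (hf'' x).deriv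
  have hF2' : ∀ x : ℝ, HasDerivAt F2 (F1 x) x := by
    intro x
    have h := (((hder α₁ x).const_mul (γ₁*(α₁^2)⁻¹)).add
      ((hder α₂ x).const_mul (γ₂*(α₂^2)⁻¹))).const_mul (4*μ)⁻¹
    have heq : F2 = fun y : ℝ =>
        (4*μ)⁻¹ * (γ₁*(α₁^2)⁻¹*Complex.exp (2*α₁*y) + γ₂*(α₂^2)⁻¹*Complex.exp (2*α₂*y)) :=
      funext hF2
    rw [heq, hF1]
    convert h using 1
    · rfl
    · rfl
    field_simp
    ring
  have hF1' : ∀ x : ℝ, HasDerivAt F1 (f x) x := by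
    intro x
    have h := (((hder α₁ x).const_mul (γ₁*α₁⁻¹)).add
      ((hder α₂ x).const_mul (γ₂*α₂⁻¹))).const_mul (2*μ)⁻¹
    have heq : F1 = fun y : ℝ =>
        (2*μ)⁻¹ * (γ₁*α₁⁻¹*Complex.exp (2*α₁*y) + γ₂*α₂⁻¹*Complex.exp (2*α₂*y)) :=
      funext hF1
    rw [heq, hf]
    convert h using 1
    · rfl
    · rfl
    field_simp
  have hshift : ∀ (c : ℂ) (x : ℝ),
      Complex.exp (2*c*((x+1 : ℝ) : ℂ)) = Complex.exp (2*c*x) * Complex.exp (2*c) := by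
    intro c x
    rw [← Complex.exp_add]
    congr 1
    push_cast
    ring
  refine ⟨hF2', hF1', ?_, ?_, ?_, ?_, ?_⟩
  · rw [hF1 1]
    rw [show ((2 : ℂ) * α₁ * ((1:ℝ):ℂ)) = 2*α₁ by push_cast; ring,
        show ((2 : ℂ) * α₂ * ((1:ℝ):ℂ)) = 2*α₂ by push_cast; ring, hexp1, hexp2]
    field_simp
    linear_combination 4*μ^3*hγα
  · rw [hF2 1]
    rw [show ((2 : ℂ) * α₁ * ((1:ℝ):ℂ)) = 2*α₁ by push_cast; ring,
        show ((2 : ℂ) * α₂ * ((1:ℝ):ℂ)) = 2*α₂ by push_cast; ring, hexp1, hexp2]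
    field_simp
    linear_combination hγsum
  · rw [hf 0]
    rw [show ((2 : ℂ) * α₁ * ((0:ℝ):ℂ)) = 0 by push_cast; ring,
        show ((2 : ℂ) * α₂ * ((0:ℝ):ℂ)) = 0 by push_cast; ring, Complex.exp_zero]
    rw [mul_one, mul_one, hγsum, mul_one]
  · rw [hdf]
    simp only
    rw [show ((2 : ℂ) * α₁ * ((0:ℝ):ℂ)) = 0 by push_cast; ring,
        show ((2 : ℂ) * α₂ * ((0:ℝ):ℂ)) = 0 by push_cast; ring, Complex.exp_zero]
    rw [mul_one, mul_one, hγα, mul_zero]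
  · intro x
    refine ⟨?_, ?_, ?_⟩
    · rw [hF2 (x+1), hf x, hshift, hshift, hexp1, hexp2]
      field_simp
    · rw [hF1 (x+1), hdf]
      simp only
      rw [hshift, hshift, hexp1, hexp2]
      field_simp
      ring
    · rw [hf (x+1), hddf]
      simp only
      rw [hshift, hshift, hexp1, hexp2]
      field_simp
end

section
/- Let k ≥ 2, let s, μ ∈ ℂ be nonzero with μ² = 1/(ks), and let α₁,…,α_k ∈ ℂ be distinct and nonzero with α_ν^k·e^{−kα_ν} = s^k for every ν. Put γ_ν = Π_{l≠ν} α_l/(α_l − α_ν). For 0 ≤ j ≤ k define f^{(-j)}(x) = (μ·k^j)^{-1}·Σ_{ν=1}^k γ_ν·α_ν^{-j}·e^{kα_ν x} (so f = f^{(0)}). Then: (f^{(-j)})' = f^{(-(j-1))} for 1 ≤ j ≤ k, i.e. the f^{(-j)} are successive antiderivatives of f; f^{(-j)}(1) = 0 for 1 ≤ j ≤ k−1; f^{(-k)}(1) = μ^{2k−1}; f(0) = μ^{-1}; and the j-th derivative f^{(j)}(0) = 0 for 1 ≤ j ≤ k−1. -/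
open Polynomial Finset in
lemma lagrange_sum' {k : ℕ} (α : Fin k → ℂ) (hαinj : Function.Injective α)
    (m : ℕ) (hm : m < k) :
    ∑ ν, (∏ l ∈ Finset.univ.erase ν, α l / (α l - α ν)) * α ν ^ m =
      if m = 0 then 1 else 0 := by
  classical
  have hinj : Set.InjOn α (Finset.univ : Finset (Fin k)) := fun a _ b _ h => hαinj h
  have hdeg : (X ^ m : ℂ[X]).degree < ((Finset.univ : Finset (Fin k)).card : ℕ) := by
    rw [degree_X_pow, Finset.card_univ, Fintype.card_fin]
    exact_mod_cast hm
  have h := Lagrange.eq_interpolate (s := Finset.univ) (v := α) hinj hdeg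
  have h0 := congrArg (Polynomial.eval 0) h
  rw [Lagrange.interpolate_apply] at h0
  simp only [eval_pow, eval_X, eval_finset_sum, eval_mul, eval_C] at h0
  have hb : ∀ ν : Fin k, Polynomial.eval 0 (Lagrange.basis Finset.univ α ν) =
      ∏ l ∈ Finset.univ.erase ν, α l / (α l - α ν) := by
    intro ν
    rw [Lagrange.basis, Polynomial.eval_prod]
    refine Finset.prod_congr rfl fun l hl => ?_
    have hne : α l - α ν ≠ 0 := sub_ne_zero.mpr fun h => (Finset.mem_erase.mp hl).1 (hαinj h)
    have hne' : α ν - α l ≠ 0 := sub_ne_zero.mpr fun h => (Finset.mem_erase.mp hl).1 (hαinj h.symm)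
    rw [Lagrange.basisDivisor]
    simp only [eval_mul, eval_C, eval_sub, eval_X]
    field_simp
    ring
  simp only [hb] at h0
  rw [zero_pow_eq] at h0
  rw [h0]
  exact Finset.sum_congr rfl fun ν _ => mul_comm _ _

lemma hasDerivAt_expsum {k : ℕ} (c : ℂ) (a b : Fin k → ℂ) (x : ℝ) :
    HasDerivAt (fun x : ℝ => c * ∑ ν : Fin k, a ν * Complex.exp (b ν * x))
      (c * ∑ ν : Fin k, a ν * (b ν * Complex.exp (b ν * x))) x := by
  refine HasDerivAt.const_mul c (HasDerivAt.fun_sum fun ν _ => ?_)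
  have h1 : HasDerivAt (fun x : ℝ => b ν * (x : ℂ)) (b ν) x := by
    simpa using (Complex.ofRealCLM.hasDerivAt (x := x)).const_mul (b ν)
  have := (h1.cexp).const_mul (a ν)
  convert this using 1
  · rfl
  ring

/-- Properties of the explicit functions `f^{(-j)}` built from the `k` branches of Lambert's
W-function (general case `k ≥ 2`): with `μ² = 1/(ks)`, `α_ν` distinct, nonzero, satisfying
`α_ν^k e^{−kα_ν} = s^k`, `γ_ν = Π_{l≠ν} α_l/(α_l − α_ν)`, and
`f^{(-j)}(x) = (μk^j)⁻¹ Σ_ν γ_ν α_ν^{-j} e^{kα_ν x}` for `0 ≤ j ≤ k`, the `f^{(-j)}` are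
successive antiderivatives of `f = f^{(0)}`, with `f^{(-j)}(1) = 0` for `1 ≤ j ≤ k−1`,
`f^{(-k)}(1) = μ^{2k−1}`, `f(0) = μ⁻¹`, and `f^{(j)}(0) = 0` for `1 ≤ j ≤ k−1`. -/
theorem explicit_solution_properties_general (k : ℕ) (hk : 2 ≤ k)
    (s μ : ℂ) (hs : s ≠ 0) (hμ : μ ≠ 0) (hμ2 : μ ^ 2 = 1 / (k * s))
    (α : Fin k → ℂ) (hαinj : Function.Injective α) (hα0 : ∀ ν, α ν ≠ 0)
    (hα : ∀ ν, α ν ^ k * Complex.exp (-(k : ℂ) * α ν) = s ^ k)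
    (γ : Fin k → ℂ)
    (hγ : ∀ ν, γ ν = ∏ l ∈ Finset.univ.erase ν, α l / (α l - α ν))
    (F : ℕ → ℝ → ℂ)
    (hF : ∀ j : ℕ, j ≤ k → ∀ x : ℝ, F j x =
      (μ * (k : ℂ) ^ j)⁻¹ *
        ∑ ν : Fin k, γ ν * (α ν ^ j)⁻¹ * Complex.exp ((k : ℂ) * α ν * (x : ℂ))) :
    (∀ j : ℕ, 1 ≤ j → j ≤ k → ∀ x : ℝ, HasDerivAt (F j) (F (j - 1) x) x) ∧
    (∀ j : ℕ, 1 ≤ j → j ≤ k - 1 → F j 1 = 0) ∧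
    F k 1 = μ ^ (2 * k - 1) ∧
    F 0 0 = μ⁻¹ ∧
    (∀ j : ℕ, 1 ≤ j → j ≤ k - 1 → iteratedDeriv j (F 0) 0 = 0) := by
  have hk0 : (k : ℂ) ≠ 0 := Nat.cast_ne_zero.mpr (by omega)
  -- Lagrange identity
  have hγα : ∀ m : ℕ, m < k → ∑ ν, γ ν * α ν ^ m = if m = 0 then 1 else 0 := by
    intro m hm
    simp only [hγ]
    exact lagrange_sum' α hαinj m hm
  -- exponential value at x = 1
  have hexp : ∀ ν, Complex.exp ((k : ℂ) * α ν) = α ν ^ k / s ^ k := by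
    intro ν
    have h := hα ν
    have h2 : Complex.exp (-(k : ℂ) * α ν) * Complex.exp ((k : ℂ) * α ν) = 1 := by
      have hz : -(k : ℂ) * α ν + (k : ℂ) * α ν = 0 := by ring
      rw [← Complex.exp_add, hz, Complex.exp_zero]
    have hsk : (s : ℂ) ^ k ≠ 0 := pow_ne_zero _ hs
    rw [eq_div_iff hsk]
    calc Complex.exp ((k : ℂ) * α ν) * s ^ k
        = Complex.exp ((k : ℂ) * α ν) * (α ν ^ k * Complex.exp (-(k : ℂ) * α ν)) := by rw [h]
      _ = α ν ^ k * (Complex.exp (-(k : ℂ) * α ν) * Complex.exp ((k : ℂ) * α ν)) := by ring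
      _ = α ν ^ k := by rw [h2, mul_one]
  -- F j 1 computed
  have hF1 : ∀ j : ℕ, j ≤ k → F j 1 =
      (μ * (k : ℂ) ^ j)⁻¹ * (s ^ k)⁻¹ * ∑ ν, γ ν * α ν ^ (k - j) := by
    intro j hj
    rw [hF j hj 1, mul_assoc]
    congr 1
    rw [Finset.mul_sum]
    refine Finset.sum_congr rfl fun ν _ => ?_
    simp only [Complex.ofReal_one, mul_one]
    rw [hexp ν, pow_sub₀ _ (hα0 ν) hj]
    simp only [div_eq_mul_inv]
    ring
  refine ⟨?_, ?_, ?_, ?_, ?_⟩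
  · -- derivatives
    intro j hj1 hjk x
    obtain ⟨i, rfl⟩ : ∃ i, j = i + 1 := ⟨j - 1, by omega⟩
    have hd := hasDerivAt_expsum ((μ * (k : ℂ) ^ (i + 1))⁻¹)
      (fun ν => γ ν * (α ν ^ (i + 1))⁻¹) (fun ν => (k : ℂ) * α ν) x
    have heq : F (i + 1) = fun x : ℝ =>
        (μ * (k : ℂ) ^ (i + 1))⁻¹ *
          ∑ ν : Fin k, γ ν * (α ν ^ (i + 1))⁻¹ * Complex.exp ((k : ℂ) * α ν * x) := by
      funext y; exact hF (i + 1) hjk y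
    rw [heq]
    convert hd using 1
    rw [show i + 1 - 1 = i by omega, hF i (by omega) x, Finset.mul_sum, Finset.mul_sum]
    refine Finset.sum_congr rfl fun ν _ => ?_
    have ha := hα0 ν
    have hkk : (k : ℂ)⁻¹ * k = 1 := inv_mul_cancel₀ hk0
    have haa : (α ν)⁻¹ * α ν = 1 := inv_mul_cancel₀ ha
    rw [pow_succ, pow_succ, mul_inv, mul_inv, mul_inv, mul_inv]
    linear_combination
      -(μ⁻¹ * ((k : ℂ) ^ i)⁻¹ * (γ ν * ((α ν ^ i)⁻¹ * ((α ν)⁻¹ * α ν)) *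
        Complex.exp ((k : ℂ) * α ν * x))) * hkk -
      (μ⁻¹ * ((k : ℂ) ^ i)⁻¹ * (γ ν * (α ν ^ i)⁻¹ *
        Complex.exp ((k : ℂ) * α ν * x))) * haa
  · -- F j 1 = 0 for 1 ≤ j ≤ k - 1
    intro j hj1 hjk
    rw [hF1 j (by omega), hγα (k - j) (by omega), if_neg (by omega), mul_zero]
  · -- F k 1 = μ ^ (2k - 1)
    rw [hF1 k le_rfl, Nat.sub_self, hγα 0 (by omega), if_pos rfl, mul_one]
    have hks : (k : ℂ) * s ≠ 0 := mul_ne_zero hk0 hs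
    have h1 : μ ^ (2 * k) = ((k : ℂ) * s)⁻¹ ^ k := by
      rw [show 2 * k = k * 2 by ring, pow_mul']
      rw [hμ2, one_div]
    have h2 : μ ^ (2 * k - 1) * μ = μ ^ (2 * k) := by
      rw [← pow_succ]; congr 1; omega
    have hne : (μ * (k : ℂ) ^ k) ≠ 0 := mul_ne_zero hμ (pow_ne_zero _ hk0)
    have hsk : (s : ℂ) ^ k ≠ 0 := pow_ne_zero _ hs
    rw [← mul_inv]
    refine (eq_inv_of_mul_eq_one_right ?_).symm
    calc μ * (k : ℂ) ^ k * s ^ k * μ ^ (2 * k - 1)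
        = μ ^ (2 * k) * ((k : ℂ) * s) ^ k := by rw [← h2, mul_pow]; ring
      _ = ((k : ℂ) * s)⁻¹ ^ k * ((k : ℂ) * s) ^ k := by rw [h1]
      _ = 1 := by rw [← mul_pow, inv_mul_cancel₀ hks, one_pow]
  · -- F 0 0 = μ⁻¹
    rw [hF 0 (by omega) 0]
    simp only [pow_zero, inv_one, mul_one, Complex.ofReal_zero, mul_zero, Complex.exp_zero]
    have := hγα 0 (by omega)
    simp only [pow_zero, mul_one] at this
    rw [this]
    simp
  · -- iterated derivatives at 0
    intro j hj1 hjk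
    have key : ∀ n : ℕ, iteratedDeriv n (F 0) = fun x : ℝ =>
        μ⁻¹ * ∑ ν : Fin k, γ ν * ((k : ℂ) * α ν) ^ n * Complex.exp ((k : ℂ) * α ν * x) := by
      intro n
      induction n with
      | zero =>
        rw [iteratedDeriv_zero]
        funext x
        rw [hF 0 (by omega) x]
        simp
      | succ n ih =>
        rw [iteratedDeriv_succ, ih]
        funext x
        have hd := hasDerivAt_expsum (μ⁻¹) (fun ν => γ ν * ((k : ℂ) * α ν) ^ n)
          (fun ν => (k : ℂ) * α ν) x
        rw [hd.deriv]
        rw [Finset.mul_sum, Finset.mul_sum]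
        refine Finset.sum_congr rfl fun ν _ => ?_
        rw [pow_succ]
        ring
    rw [key j]
    simp only [Complex.ofReal_zero, mul_zero, Complex.exp_zero, mul_one]
    have : ∑ ν : Fin k, γ ν * ((k : ℂ) * α ν) ^ j = (k : ℂ) ^ j * ∑ ν, γ ν * α ν ^ j := by
      rw [Finset.mul_sum]
      exact Finset.sum_congr rfl fun ν _ => by rw [mul_pow]; ring
    rw [this, hγα j (by omega), if_neg (by omega), mul_zero, mul_zero]
end
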